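/- Let k ≥ 2. If a position S = (x_1, ..., x_n) with x_3 ≤ 1 and β(S) even is a P-position in misère k-Bounded Greedy Nim, then (x_1, x_2) is k-nice. -/

import Mathlib

/-- One move in `k`-bounded greedy Nim on a descending-sorted list of heaps:
remove `t` stones with `1 ≤ t ≤ min x₁ k` from a heap with the largest
number of stones `x₁` (the head), and re-sort the result in descending order. -/
def BFollower (k : ℕ) (S S' : List ℕ) : Prop :=
  ∃ t : ℕ, 1 ≤ t ∧ t ≤ min S.headI k ∧
    S' = List.orderedInsert (· ≥ ·) (S.headI - t) S.tail

/-- One move in greedy Nim: remove any `t` stones with `1 ≤ t ≤ x₁` from a heap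
with the largest number of stones `x₁`, and re-sort in descending order. -/
def GFollower (S S' : List ℕ) : Prop :=
  ∃ t : ℕ, 1 ≤ t ∧ t ≤ S.headI ∧
    S' = List.orderedInsert (· ≥ ·) (S.headI - t) S.tail

theorem BFollower.sum_lt {k : ℕ} {S S' : List ℕ} (h : BFollower k S S') :
    S'.sum < S.sum := by
  obtain ⟨t, ht1, ht2, rfl⟩ := h
  have htx : t ≤ S.headI := le_trans ht2 (min_le_left _ _)
  match S with
  | [] => simp [List.headI] at htx; omega
  | a :: l =>
      have hperm := List.perm_orderedInsert (· ≥ ·) (a - t) l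
      have hsum : (List.orderedInsert (· ≥ ·) (a - t) l).sum = (a - t) + l.sum :=
        hperm.sum_eq
      simp only [List.headI, List.tail] at *
      simp [hsum]
      omega

theorem GFollower.sum_lt {S S' : List ℕ} (h : GFollower S S') :
    S'.sum < S.sum := by
  obtain ⟨t, ht1, ht2, rfl⟩ := h
  match S with
  | [] => simp [List.headI] at ht2; omega
  | a :: l =>
      have hperm := List.perm_orderedInsert (· ≥ ·) (a - t) l
      have hsum : (List.orderedInsert (· ≥ ·) (a - t) l).sum = (a - t) + l.sum :=
        hperm.sum_eq
      simp only [List.headI, List.tail] at *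
      simp [hsum]
      omega

/-- `S` is a P-position of `k`-bounded greedy Nim under the normal play
convention: the all-zero position is a P-position (it has no followers), and a
position is a P-position iff every follower is an N-position. -/
def NormalBP (k : ℕ) (S : List ℕ) : Prop :=
  ∀ S', BFollower k S S' → ¬ NormalBP k S'
termination_by S.sum
decreasing_by exact BFollower.sum_lt (by assumption)

/-- `S` is a P-position of `k`-bounded greedy Nim under the misère play
convention: the all-zero position is an N-position, and any other position is a
P-position iff every follower is an N-position. -/
def MisereBP (k : ℕ) (S : List ℕ) : Prop :=
  S.sum ≠ 0 ∧ ∀ S', BFollower k S S' → ¬ MisereBP k S'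
termination_by S.sum
decreasing_by exact BFollower.sum_lt (by assumption)

/-- Normal-play P-positions of greedy Nim. -/
def NormalGP (S : List ℕ) : Prop :=
  ∀ S', GFollower S S' → ¬ NormalGP S'
termination_by S.sum
decreasing_by exact GFollower.sum_lt (by assumption)

/-- Misère-play P-positions of greedy Nim. -/
def MisereGP (S : List ℕ) : Prop :=
  S.sum ≠ 0 ∧ ∀ S', GFollower S S' → ¬ MisereGP S'
termination_by S.sum
decreasing_by exact GFollower.sum_lt (by assumption)

/-- `R a` is the remainder of `a` modulo `k + 1`. -/
def R (k a : ℕ) : ℕ := a % (k + 1)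

/-- The `j`-th heap (1-based) of the position `S`. -/
def heap (S : List ℕ) (j : ℕ) : ℕ := S.getD (j - 1) 0

/-- `β(S)`: `0` if `x₃ = 0`, and `max { j : x_j = x₃ } - 2` otherwise. -/
noncomputable def beta (S : List ℕ) : ℕ :=
  if heap S 3 = 0 then 0
  else sSup {j : ℕ | 1 ≤ j ∧ j ≤ S.length ∧ heap S j = heap S 3} - 2

/-- `α(S)`: `0` if `x₁ = 0`, and `max { j : x_j = x₁ }` otherwise. -/
noncomputable def alpha (S : List ℕ) : ℕ :=
  if heap S 1 = 0 then 0
  else sSup {j : ℕ | 1 ≤ j ∧ j ≤ S.length ∧ heap S j = heap S 1}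

/-- The pair `(x₁, x₂)` (with `x₁ ≥ x₂`) is `k`-nice. -/
def KNice (k x₁ x₂ : ℕ) : Prop :=
  (R k x₁ = 0 ∧ R k x₂ = 1) ∨
  (R k (x₁ - x₂) = 0 ∧ 2 ≤ R k x₂) ∨
  (R k x₁ = 1 ∧ R k x₂ = 0)

/-- The triple `(x₁, x₂, x₃)` (with `x₁ ≥ x₂ ≥ x₃`) is `k`-good. -/
def KGood (k x₁ x₂ x₃ : ℕ) : Prop :=
  (R k (x₁ - x₂) = k ∧ R k (x₂ - x₃) = 0) ∨
  (R k (x₁ - x₂) = 0 ∧ 1 ≤ R k (x₂ - x₃) ∧ R k (x₂ - x₃) ≤ k - 1) ∨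
  (R k (x₁ - x₂) = 1 ∧ R k (x₂ - x₃) = k)


/-- The condition of the main theorem characterizing misère P-positions of
`k`-bounded greedy Nim. -/
noncomputable def MiserePCond (k : ℕ) (S : List ℕ) : Prop :=
  (heap S 3 ≤ 1 ∧ Even (beta S) ∧ KNice k (heap S 1) (heap S 2)) ∨
  (heap S 3 ≤ 1 ∧ Odd (beta S) ∧ R k (heap S 1 - heap S 2) = 0) ∨
  (2 ≤ heap S 3 ∧ Even (beta S) ∧ R k (heap S 1 - heap S 2) = 0) ∨
  (2 ≤ heap S 3 ∧ Odd (beta S) ∧ KGood k (heap S 1) (heap S 2) (heap S 3))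

def Cond (k a b m : ℕ) : Prop := if Even m then KNice k a b else R k (a - b) = 0

def FT (a b m t : ℕ) : ℕ × ℕ × ℕ :=
  if b ≤ a - t then (a - t, b, m)
  else if 1 ≤ a - t then (b, a - t, m)
  else if m = 0 then (b, 0, 0)
  else (b, 1, m - 1)

def Cond3 (k : ℕ) (p : ℕ × ℕ × ℕ) : Prop := Cond k p.1 p.2.1 p.2.2

lemma sub_mod_zero {n a b : ℕ} (h : b ≤ a) : (a - b) % n = 0 ↔ a % n = b % n := by
  rw [← Nat.dvd_iff_mod_eq_zero, ← Nat.modEq_iff_dvd' h]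
  exact ⟨fun h => h.symm, fun h => h.symm⟩

lemma sub_mod_eq {n a t v : ℕ} (ht : t ≤ a) (hv : v < n) :
    (a - t) % n = v ↔ a % n = (v + t) % n := by
  constructor
  · intro h
    conv_lhs => rw [← Nat.sub_add_cancel ht]
    conv_rhs => rw [Nat.add_mod]
    rw [Nat.add_mod, h, Nat.mod_eq_of_lt hv]
  · intro h
    have h1 : (a - t) + t ≡ v + t [MOD n] := by
      rw [Nat.sub_add_cancel ht]; exact h
    have h2 := Nat.ModEq.add_right_cancel' t h1
    simpa [Nat.ModEq, Nat.mod_eq_of_lt hv] using h2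

lemma mod_two_cases {n x : ℕ} (hn : 0 < n) (h : x < 2 * n) :
    x % n = x ∨ (n ≤ x ∧ x % n = x - n) := by
  rcases lt_or_ge x n with h1 | h1
  · exact Or.inl (Nat.mod_eq_of_lt h1)
  · exact Or.inr ⟨h1, by rw [Nat.mod_eq_sub_mod h1, Nat.mod_eq_of_lt (by omega)]⟩

section key
variable {k : ℕ}

lemma P_odd (hk : 2 ≤ k) {a b m : ℕ} (hab : b ≤ a) (hmb : m ≠ 0 → 1 ≤ b)
    (hm : ¬ Even m) (hd : R k (a - b) = 0) {t : ℕ} (ht1 : 1 ≤ t) (hta : t ≤ a) (htk : t ≤ k) :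
    ¬ Cond3 k (FT a b m t) := by
  have hn0 : 0 < k + 1 := by omega
  have hra : a % (k+1) < k + 1 := Nat.mod_lt _ hn0
  have hrb : b % (k+1) < k + 1 := Nat.mod_lt _ hn0
  rw [R] at hd
  have hdd : a % (k+1) = b % (k+1) := (sub_mod_zero hab).mp hd
  rw [FT]
  split_ifs with hb1 hb2 hb3
  · simp only [Cond3, Cond, if_neg hm, R]
    intro h
    have h2 : (a - t) % (k+1) = b % (k+1) := (sub_mod_zero hb1).mp h
    have h3 := (sub_mod_eq hta hrb).mp (h2.trans rfl)
    have h4 := mod_two_cases hn0 (show b % (k+1) + t < 2 * (k+1) by omega)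
    omega
  · simp only [Cond3, Cond, if_neg hm, R]
    intro h
    have h2 : b % (k+1) = (a - t) % (k+1) := (sub_mod_zero (by omega)).mp h
    have h3 := (sub_mod_eq hta hrb).mp h2.symm
    have h4 := mod_two_cases hn0 (show b % (k+1) + t < 2 * (k+1) by omega)
    omega
  · exact absurd (hb3 ▸ Even.zero) hm
  · have hm1 : Even (m - 1) := by
      rcases Nat.not_even_iff_odd.mp hm with ⟨j, hj⟩
      exact ⟨j, by omega⟩
    simp only [Cond3, Cond, if_pos hm1, KNice, R]
    have h1n : 1 % (k+1) = 1 := Nat.mod_eq_of_lt (by omega)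
    -- here a - t = 0, a < b is false, so b ≥ 1, a ≤ t ≤ k
    have hb : 1 ≤ b := by omega
    have haa : a % (k+1) = a := Nat.mod_eq_of_lt (by omega)
    have hbb : b % (k+1) = b := Nat.mod_eq_of_lt (by omega)
    rintro (⟨h1, h2⟩ | ⟨h1, h2⟩ | ⟨h1, h2⟩) <;> omega

lemma N_odd (hk : 2 ≤ k) {a b m : ℕ} (hab : b ≤ a)
    (hm : ¬ Even m) (hd : R k (a - b) ≠ 0) (ha : 1 ≤ a) :
    ∃ t, 1 ≤ t ∧ t ≤ a ∧ t ≤ k ∧ Cond3 k (FT a b m t) := by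
  have hn0 : 0 < k + 1 := by omega
  have hrb : b % (k+1) < k + 1 := Nat.mod_lt _ hn0
  rw [R] at hd
  set d := (a - b) % (k+1) with hdd
  have hd1 : 1 ≤ d := by omega
  have hdlt : d < k + 1 := Nat.mod_lt _ hn0
  have hdle : d ≤ a - b := Nat.mod_le _ _
  refine ⟨d, hd1, by omega, by omega, ?_⟩
  rw [FT, if_pos (by omega : b ≤ a - d)]
  simp only [Cond3, Cond, if_neg hm, R]
  rw [sub_mod_zero (by omega : b ≤ a - d), sub_mod_eq (by omega : d ≤ a) hrb]
  have h3 := (sub_mod_eq (by omega : b ≤ a) hdlt).mp rfl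
  rw [h3, Nat.add_mod d b, Nat.mod_eq_of_lt hdlt, Nat.add_comm]


lemma P_even (hk : 2 ≤ k) {a b m : ℕ} (hab : b ≤ a) (hmb : m ≠ 0 → 1 ≤ b)
    (hm : Even m) (hN : KNice k a b) {t : ℕ} (ht1 : 1 ≤ t) (hta : t ≤ a) (htk : t ≤ k) :
    ¬ Cond3 k (FT a b m t) := by
  have hn0 : 0 < k + 1 := by omega
  have hra : a % (k+1) < k + 1 := Nat.mod_lt _ hn0
  have hrb : b % (k+1) < k + 1 := Nat.mod_lt _ hn0
  have h1n : 1 % (k+1) = 1 := Nat.mod_eq_of_lt (by omega)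
  rcases hN with ⟨h1, h2⟩ | ⟨h1, h2⟩ | ⟨h1, h2⟩
  · -- ra = 0, rb = 1
    rw [R] at h1 h2
    -- (a - b) % n = k
    have hd : (a - b) % (k+1) = k := by
      rw [sub_mod_eq hab (by omega : k < k + 1), h1]
      have : (k + b) % (k+1) = (k + b % (k+1)) % (k+1) := by
        conv_lhs => rw [Nat.add_mod]
        rw [Nat.mod_eq_of_lt (by omega : k < k + 1)]
      rw [this, h2]
      simp
    have hdle : k ≤ a - b := hd ▸ Nat.mod_le _ _
    rw [FT, if_pos (by omega : b ≤ a - t)]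
    simp only [Cond3, Cond, if_pos hm, KNice, R]
    rintro (⟨g1, g2⟩ | ⟨g1, g2⟩ | ⟨g1, g2⟩)
    · -- (a-t)%n = 0 impossible
      have h3 := (sub_mod_eq hta (by omega : 0 < k + 1)).mp g1
      have h4 := mod_two_cases hn0 (show 0 + t < 2 * (k+1) by omega)
      omega
    · omega
    · omega
  · -- d = 0, rb ≥ 2
    rw [R] at h1 h2
    have hdd : a % (k+1) = b % (k+1) := (sub_mod_zero hab).mp h1
    rw [FT]
    split_ifs with hb1 hb2 hb3
    · simp only [Cond3, Cond, if_pos hm, KNice, R]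
      rintro (⟨g1, g2⟩ | ⟨g1, g2⟩ | ⟨g1, g2⟩)
      · omega
      · have g3 : (a - t) % (k+1) = b % (k+1) := (sub_mod_zero hb1).mp g1
        have h3 := (sub_mod_eq hta hrb).mp g3
        have h4 := mod_two_cases hn0 (show b % (k+1) + t < 2 * (k+1) by omega)
        omega
      · omega
    · -- a = b here since a - b < t ≤ k and (a-b)%n = 0
      have hab0 : a = b := by
        have := Nat.mod_eq_of_lt (show a - b < k + 1 by omega)
        omega
      simp only [Cond3, Cond, if_pos hm, KNice, R]
      rintro (⟨g1, g2⟩ | ⟨g1, g2⟩ | ⟨g1, g2⟩)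
      · omega
      · have hbt : b - (a - t) = t := by omega
        rw [hbt, Nat.mod_eq_of_lt (by omega : t < k + 1)] at g1
        omega
      · omega
    · -- m = 0, follower (b,0,0)
      simp only [Cond3, Cond, if_pos Even.zero, KNice, R]
      have : (0:ℕ) % (k+1) = 0 := Nat.zero_mod _
      rintro (⟨g1, g2⟩ | ⟨g1, g2⟩ | ⟨g1, g2⟩) <;> omega
    · -- m ≥ 2 even, follower (b,1,m-1), m-1 odd
      have hm1 : ¬ Even (m - 1) := by
        rcases hm with ⟨j, hj⟩
        rw [Nat.not_even_iff_odd]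
        exact ⟨j - 1, by omega⟩
      simp only [Cond3, Cond, if_neg hm1, R]
      -- a ≤ t ≤ k, a = b (since a-b ≡ 0, a-b ≤ a ≤ k)
      have hab0 : a = b := by
        have := Nat.mod_eq_of_lt (show a - b < k + 1 by omega)
        omega
      have hbb : b % (k+1) = b := Nat.mod_eq_of_lt (by omega)
      intro g
      rw [Nat.mod_eq_of_lt (show b - 1 < k + 1 by omega)] at g
      omega
  · -- ra = 1, rb = 0
    rw [R] at h1 h2
    have hd : (a - b) % (k+1) = 1 := by
      rw [sub_mod_eq hab (by omega : 1 < k + 1), h1]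
      conv_rhs => rw [Nat.add_mod, h2, h1n]
      rw [Nat.add_zero, h1n]
    have hdle : 1 ≤ a - b := hd ▸ Nat.mod_le _ _
    have hratne : (a - t) % (k+1) ≠ 1 := by
      intro g
      have h3 := (sub_mod_eq hta (by omega : 1 < k + 1)).mp g
      have h4 := mod_two_cases hn0 (show 1 + t < 2 * (k+1) by omega)
      omega
    rw [FT]
    split_ifs with hb1 hb2 hb3
    · simp only [Cond3, Cond, if_pos hm, KNice, R]
      rintro (⟨g1, g2⟩ | ⟨g1, g2⟩ | ⟨g1, g2⟩)
      · omega
      · omega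
      · exact hratne g1
    · -- a - b = 1, b = a - 1, t ≥ 2
      have hab1 : a - b = 1 := by
        have := Nat.mod_eq_of_lt (show a - b < k + 1 by omega)
        omega
      simp only [Cond3, Cond, if_pos hm, KNice, R]
      rintro (⟨g1, g2⟩ | ⟨g1, g2⟩ | ⟨g1, g2⟩)
      · exact hratne g2
      · have hbt : b - (a - t) = t - 1 := by omega
        rw [hbt, Nat.mod_eq_of_lt (by omega : t - 1 < k + 1)] at g1
        omega
      · omega
    · -- a - t = 0, b ≥ 1: a ≤ k so ra = a = 1, b = 1, rb = 1 ≠ 0 contradiction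
      exfalso
      have haa : a % (k+1) = a := Nat.mod_eq_of_lt (by omega)
      have hbb : b % (k+1) = b := Nat.mod_eq_of_lt (by omega)
      omega
    · exfalso
      have haa : a % (k+1) = a := Nat.mod_eq_of_lt (by omega)
      have hbb : b % (k+1) = b := Nat.mod_eq_of_lt (by omega)
      omega

end key

section key2
variable {k : ℕ}

lemma N_even (hk : 2 ≤ k) {a b m : ℕ} (hab : b ≤ a)
    (hm : Even m) (hN : ¬ KNice k a b) (ha : 1 ≤ a) :
    ∃ t, 1 ≤ t ∧ t ≤ a ∧ t ≤ k ∧ Cond3 k (FT a b m t) := by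
  have hn0 : 0 < k + 1 := by omega
  have hra : a % (k+1) < k + 1 := Nat.mod_lt _ hn0
  have hrb : b % (k+1) < k + 1 := Nat.mod_lt _ hn0
  have h1n : 1 % (k+1) = 1 := Nat.mod_eq_of_lt (by omega)
  simp only [KNice, not_or, not_and_or, R] at hN
  obtain ⟨hN1, hN2, hN3⟩ := hN
  rcases Nat.lt_or_ge (b % (k+1)) 2 with hb2 | hb2
  · rcases Nat.lt_or_ge (b % (k+1)) 1 with hb1 | hb1
    · -- rb = 0, so ra ≠ 1
      have hrb0 : b % (k+1) = 0 := by omega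
      have hra1 : a % (k+1) ≠ 1 := by rcases hN3 with h | h; exact h; omega
      have hd : (a - b) % (k+1) = a % (k+1) := by
        rw [sub_mod_eq hab hra]
        conv_rhs => rw [Nat.add_mod, hrb0, Nat.add_zero]
        simp
      rcases Nat.lt_or_ge (a % (k+1)) 2 with hlt | hge
      · -- ra = 0
        have hra0 : a % (k+1) = 0 := by omega
        rcases Nat.lt_or_ge b a with hba | hba
        · -- a > b: a - b ≥ k+1
          have hdvd : k + 1 ≤ a - b := by
            refine Nat.le_of_dvd (by omega) ?_
            rw [Nat.dvd_iff_mod_eq_zero]; omega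
          refine ⟨k, by omega, by omega, le_refl k, ?_⟩
          rw [FT, if_pos (by omega : b ≤ a - k)]
          simp only [Cond3, Cond, if_pos hm, KNice, R]
          refine Or.inr (Or.inr ⟨?_, hrb0⟩)
          rw [sub_mod_eq (by omega : k ≤ a) (by omega : 1 < k + 1), hra0]
          have : (1 + k) % (k + 1) = 0 := by
            rw [show 1 + k = k + 1 by omega, Nat.mod_self]
          omega
        · -- a = b, a ≥ k+1 (since a%n=0, a ≥ 1)
          have haeq : a = b := by omega
          have hge2 : k + 1 ≤ a := by
            refine Nat.le_of_dvd (by omega) ?_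
            rw [Nat.dvd_iff_mod_eq_zero]; omega
          refine ⟨k, by omega, by omega, le_refl k, ?_⟩
          rw [FT, if_neg (by omega : ¬ b ≤ a - k), if_pos (by omega : 1 ≤ a - k)]
          simp only [Cond3, Cond, if_pos hm, KNice, R]
          refine Or.inl ⟨by omega, ?_⟩
          rw [sub_mod_eq (by omega : k ≤ a) (by omega : 1 < k + 1)]
          have : (1 + k) % (k + 1) = 0 := by
            rw [show 1 + k = k + 1 by omega, Nat.mod_self]
          omega
      · -- ra ≥ 2, t = ra - 1
        have hdle : a % (k+1) ≤ a - b := hd ▸ Nat.mod_le _ _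
        refine ⟨a % (k+1) - 1, by omega, by omega, by omega, ?_⟩
        rw [FT, if_pos (by omega : b ≤ a - (a % (k+1) - 1))]
        simp only [Cond3, Cond, if_pos hm, KNice, R]
        refine Or.inr (Or.inr ⟨?_, hrb0⟩)
        rw [sub_mod_eq (by omega : a % (k+1) - 1 ≤ a) (by omega : 1 < k + 1)]
        rw [show 1 + (a % (k+1) - 1) = a % (k+1) by omega, Nat.mod_mod]
    · -- rb = 1, ra ≠ 0
      have hrb1 : b % (k+1) = 1 := by omega
      have hra0 : a % (k+1) ≠ 0 := by rcases hN1 with h | h; exact h; omega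
      have hd : (a - b) % (k+1) = a % (k+1) - 1 := by
        rw [sub_mod_eq hab (by omega : a % (k+1) - 1 < k + 1)]
        conv_rhs => rw [Nat.add_mod, hrb1]
        rw [Nat.mod_eq_of_lt (show a % (k+1) - 1 < k + 1 by omega)]
        rw [show a % (k+1) - 1 + 1 = a % (k+1) by omega, Nat.mod_mod]
      rcases Nat.lt_or_ge (a - b) (a % (k+1)) with hlt | hge
      · -- a - b = ra - 1 (since a-b < n), a - ra = b - 1
        have hab1 : a - b = a % (k+1) - 1 := by
          have := Nat.mod_eq_of_lt (show a - b < k + 1 by omega)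
          omega
        have hble : a % (k+1) ≤ a := Nat.mod_le _ _
        rcases Nat.lt_or_ge b 2 with hbs | hbs
        · -- b = 1 (rb = 1, b ≤ 1 → b = 1), t = ra = a, a - t = 0
          have hb1 : b = 1 := by
            rcases Nat.lt_or_ge b 1 with h | h
            · exfalso; have : b = 0 := by omega
              rw [this] at hrb1; simp at hrb1
            · omega
          have hat : a - a % (k+1) = 0 := by omega
          refine ⟨a % (k+1), by omega, by omega, by omega, ?_⟩
          rw [FT, if_neg (by omega : ¬ b ≤ a - a % (k+1)), if_neg (by omega : ¬ 1 ≤ a - a % (k+1))]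
          rcases Nat.eq_zero_or_pos m with hm0 | hm0
          · rw [if_pos hm0]
            simp only [Cond3, Cond, if_pos Even.zero, KNice, R]
            exact Or.inr (Or.inr ⟨by omega, by simp⟩)
          · rw [if_neg (by omega : ¬ m = 0)]
            have hm1 : ¬ Even (m - 1) := by
              rcases hm with ⟨j, hj⟩
              rw [Nat.not_even_iff_odd]
              exact ⟨j - 1, by omega⟩
            simp only [Cond3, Cond, if_neg hm1, R, hb1]
            simp
        · -- b ≥ 2: t = ra, follower (b, b-1, m)
          refine ⟨a % (k+1), by omega, by omega, by omega, ?_⟩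
          have hat : a - a % (k+1) = b - 1 := by omega
          rw [FT, if_neg (by omega : ¬ b ≤ a - a % (k+1)), if_pos (by omega : 1 ≤ a - a % (k+1))]
          simp only [Cond3, Cond, if_pos hm, KNice, R, hat]
          refine Or.inr (Or.inr ⟨hrb1, ?_⟩)
          rw [sub_mod_eq (by omega : 1 ≤ b) (by omega : 0 < k + 1), Nat.zero_add, h1n]
          exact hrb1
      · -- a - b ≥ ra: t = ra, case (i), clause 1
        refine ⟨a % (k+1), by omega, Nat.mod_le _ _, by omega, ?_⟩
        rw [FT, if_pos (by omega : b ≤ a - a % (k+1))]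
        simp only [Cond3, Cond, if_pos hm, KNice, R]
        refine Or.inl ⟨?_, hrb1⟩
        rw [sub_mod_eq (Nat.mod_le _ _) hn0]
        rw [Nat.zero_add, Nat.mod_mod]
  · -- rb ≥ 2: d ≠ 0
    have hd0 : (a - b) % (k+1) ≠ 0 := by
      rcases hN2 with h | h; exact h; omega
    set d := (a - b) % (k+1) with hdd
    have hdlt : d < k + 1 := Nat.mod_lt _ hn0
    have hdle : d ≤ a - b := Nat.mod_le _ _
    refine ⟨d, by omega, by omega, by omega, ?_⟩
    rw [FT, if_pos (by omega : b ≤ a - d)]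
    simp only [Cond3, Cond, if_pos hm, KNice, R]
    refine Or.inr (Or.inl ⟨?_, hb2⟩)
    rw [sub_mod_zero (by omega : b ≤ a - d), sub_mod_eq (by omega : d ≤ a) hrb]
    have h3 := (sub_mod_eq hab hdlt).mp rfl
    rw [h3, Nat.add_mod d b, Nat.mod_eq_of_lt hdlt, Nat.add_comm]

lemma key (hk : 2 ≤ k) {a b m : ℕ} (hab : b ≤ a) (hmb : m ≠ 0 → 1 ≤ b) :
    Cond k a b m ↔
      (1 ≤ a ∧ ∀ t, 1 ≤ t → t ≤ a → t ≤ k → ¬ Cond3 k (FT a b m t)) := by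
  constructor
  · intro hC
    have ha : 1 ≤ a := by
      by_contra h
      have ha0 : a = 0 := by omega
      have hb0 : b = 0 := by omega
      have hm0 : m = 0 := by
        by_contra hm0
        have := hmb hm0
        omega
      rw [ha0, hb0, hm0, Cond, if_pos Even.zero, KNice] at hC
      simp [R, Nat.mod_eq_of_lt (show 1 < k + 1 by omega)] at hC
    refine ⟨ha, fun t ht1 hta htk => ?_⟩
    by_cases hm : Even m
    · exact P_even hk hab hmb hm (by rwa [Cond, if_pos hm] at hC) ht1 hta htk
    · exact P_odd hk hab hmb hm (by rwa [Cond, if_neg hm] at hC) ht1 hta htk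
  · rintro ⟨ha, hall⟩
    by_contra hC
    by_cases hm : Even m
    · have hN : ¬ KNice k a b := by rwa [Cond, if_pos hm] at hC
      obtain ⟨t, h1, h2, h3, h4⟩ := N_even hk hab hm hN ha
      exact hall t h1 h2 h3 h4
    · have hN : R k (a - b) ≠ 0 := by rwa [Cond, if_neg hm] at hC
      obtain ⟨t, h1, h2, h3, h4⟩ := N_odd hk hab hm hN ha
      exact hall t h1 h2 h3 h4

end key2

lemma sorted_cons_le {a : ℕ} {l : List ℕ} (h : (a::l).Pairwise (· ≥ ·)) : ∀ x ∈ l, x ≤ a := by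
  rw [List.pairwise_cons] at h
  exact fun x hx => h.1 x hx

lemma follower_facts {a b c d t : ℕ} {L : List ℕ}
    (hsort : (a::b::c::d::L).Pairwise (· ≥ ·)) (hc : c ≤ 1) (ht1 : 1 ≤ t) (hta : t ≤ a) :
    (List.orderedInsert (· ≥ ·) (a - t) (b::c::d::L)).Pairwise (· ≥ ·) ∧
    4 ≤ (List.orderedInsert (· ≥ ·) (a - t) (b::c::d::L)).length ∧
    heap (List.orderedInsert (· ≥ ·) (a - t) (b::c::d::L)) 3 ≤ 1 ∧
    (heap (List.orderedInsert (· ≥ ·) (a - t) (b::c::d::L)) 1,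
     heap (List.orderedInsert (· ≥ ·) (a - t) (b::c::d::L)) 2,
     ((List.orderedInsert (· ≥ ·) (a - t) (b::c::d::L)).drop 2).sum)
       = FT a b ((c::d::L).sum) t := by
  have hsort1 : (b::c::d::L).Pairwise (· ≥ ·) := hsort.of_cons
  have hsort2 : (c::d::L).Pairwise (· ≥ ·) := hsort1.of_cons
  have hsort3 : (d::L).Pairwise (· ≥ ·) := hsort2.of_cons
  have hdc : d ≤ c := sorted_cons_le hsort2 d (by simp)
  have hLc : ∀ x ∈ d::L, x ≤ c := sorted_cons_le hsort2
  refine ⟨hsort1.orderedInsert _ _, ?_, ?_⟩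
  · rw [List.orderedInsert_length]
    simp
  rcases Nat.lt_or_ge (a - t) b with hxb | hxb
  · rcases Nat.lt_or_ge (a - t) c with hxc | hxc
    · -- a - t < c, so a - t = 0, c = 1
      have hx0 : a - t = 0 := by omega
      have hc1 : c = 1 := by omega
      have hEq : List.orderedInsert (· ≥ ·) (a - t) (b::c::d::L)
          = b :: c :: List.orderedInsert (· ≥ ·) (a - t) (d::L) := by
        rw [List.orderedInsert, if_neg (by omega : ¬ a - t ≥ b),
            List.orderedInsert, if_neg (by omega : ¬ a - t ≥ c)]
      rw [hEq]
      have hsum : (List.orderedInsert (· ≥ ·) (a - t) (d::L)).sum = (a - t) + (d::L).sum :=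
        (List.perm_orderedInsert (· ≥ ·) (a - t) (d::L)).sum_eq
      constructor
      · -- heap 3 ≤ 1
        rcases Nat.lt_or_ge (a - t) d with h1 | h1
        · rw [List.orderedInsert, if_neg (by omega : ¬ a - t ≥ d)]
          simpa [heap] using (by omega : d ≤ 1)
        · rw [List.orderedInsert, if_pos (by omega : a - t ≥ d)]
          simpa [heap] using (by omega : a - t ≤ 1)
      · have hm1 : (c::d::L).sum ≠ 0 := by simp [hc1]
        rw [FT, if_neg (by omega : ¬ b ≤ a - t), if_neg (by omega : ¬ 1 ≤ a - t),
            if_neg hm1]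
        simp only [heap, List.getD_cons_zero, List.getD_cons_succ, List.drop, hsum,
          List.sum_cons, Prod.mk.injEq]
        refine ⟨rfl, by omega, by omega⟩
    · -- a - t ≥ c : result is b :: (a-t) :: c :: d :: L
      have hEq : List.orderedInsert (· ≥ ·) (a - t) (b::c::d::L)
          = b :: (a - t) :: c :: d :: L := by
        rw [List.orderedInsert, if_neg (by omega : ¬ a - t ≥ b),
            List.orderedInsert, if_pos (by omega : a - t ≥ c)]
      rw [hEq]
      constructor
      · simpa [heap] using hc
      · rcases Nat.lt_or_ge (a - t) 1 with h1 | h1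
        · -- a - t = 0, c = 0, m = 0
          have hc0 : c = 0 := by omega
          have hm0 : (c::d::L).sum = 0 := by
            have : (d::L).sum = 0 := List.sum_eq_zero (fun x hx => by
              have := hLc x hx; omega)
            simp [hc0, this]
          rw [FT, if_neg (by omega : ¬ b ≤ a - t), if_neg (by omega : ¬ 1 ≤ a - t),
              if_pos hm0]
          have hm0' : c + (d + L.sum) = 0 := by simpa [List.sum_cons] using hm0
          simp only [heap, List.getD_cons_zero, List.getD_cons_succ, List.drop,
            List.sum_cons, Prod.mk.injEq]
          refine ⟨rfl, by omega, by omega⟩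
        · rw [FT, if_neg (by omega : ¬ b ≤ a - t), if_pos h1]
          simp [heap]
  · -- a - t ≥ b : result is (a-t) :: b :: c :: d :: L
    have hEq : List.orderedInsert (· ≥ ·) (a - t) (b::c::d::L)
        = (a - t) :: b :: c :: d :: L := by
      rw [List.orderedInsert, if_pos (by omega : a - t ≥ b)]
    rw [hEq, FT, if_pos hxb]
    constructor
    · simpa [heap] using hc
    · simp [heap]

lemma bridge (k : ℕ) (hk : 2 ≤ k) :
    ∀ N (S : List ℕ), S.sum ≤ N → 4 ≤ S.length → S.Pairwise (· ≥ ·) → heap S 3 ≤ 1 →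
    (MisereBP k S ↔ Cond k (heap S 1) (heap S 2) ((S.drop 2).sum)) := by
  intro N
  induction N with
  | zero =>
    intro S hsum hlen hsort h3
    rcases S with _ | ⟨a, _ | ⟨b, _ | ⟨c, _ | ⟨d, L⟩⟩⟩⟩
    · simp at hlen
    · simp at hlen
    · simp at hlen
    · simp at hlen
    have hsum0 : (a::b::c::d::L).sum = 0 := Nat.le_zero.mp hsum
    simp only [List.sum_cons] at hsum0
    have hLsum : L.sum = 0 := by omega
    have ha0 : a = 0 := by omega
    have hb0 : b = 0 := by omega
    have hc0 : c = 0 := by omega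
    have hd0 : d = 0 := by omega
    have hm0 : (List.drop 2 (a::b::c::d::L)).sum = 0 := by
      simp [List.sum_cons]; omega
    constructor
    · intro hP
      rw [MisereBP] at hP
      exact absurd (Nat.le_zero.mp hsum) hP.1
    · intro hC
      exfalso
      rw [show heap (a::b::c::d::L) 1 = a from by simp [heap],
          show heap (a::b::c::d::L) 2 = b from by simp [heap], hm0, ha0, hb0] at hC
      rw [Cond, if_pos Even.zero, KNice] at hC
      simp [R, Nat.mod_eq_of_lt (show 1 < k + 1 by omega)] at hC
  | succ N ih =>
    intro S hsum hlen hsort h3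
    rcases S with _ | ⟨a, _ | ⟨b, _ | ⟨c, _ | ⟨d, L⟩⟩⟩⟩
    · simp at hlen
    · simp at hlen
    · simp at hlen
    · simp at hlen
    have hsort1 : (b::c::d::L).Pairwise (· ≥ ·) := hsort.of_cons
    have hsort2 : (c::d::L).Pairwise (· ≥ ·) := hsort1.of_cons
    have hab : b ≤ a := sorted_cons_le hsort b (by simp)
    have hbc : c ≤ b := sorted_cons_le hsort1 c (by simp)
    have hLc : ∀ x ∈ d::L, x ≤ c := sorted_cons_le hsort2
    have hdc : d ≤ c := hLc d (by simp)
    have hc : c ≤ 1 := by simpa [heap] using h3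
    rw [show heap (a::b::c::d::L) 1 = a from by simp [heap],
        show heap (a::b::c::d::L) 2 = b from by simp [heap],
        show List.drop 2 (a::b::c::d::L) = c::d::L from rfl]
    have hmb : (c::d::L).sum ≠ 0 → 1 ≤ b := by
      intro hm
      by_contra hb
      have hc0 : c = 0 := by omega
      have : (d::L).sum = 0 := List.sum_eq_zero (fun x hx => by have := hLc x hx; omega)
      simp [List.sum_cons, hc0, this] at hm
    rw [MisereBP, key hk hab hmb]
    have hsum_eq : (a::b::c::d::L).sum = a + (b + (c + (d + L.sum))) := by
      simp [List.sum_cons]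
    constructor
    · rintro ⟨hs, hall⟩
      refine ⟨?_, ?_⟩
      · by_contra ha
        have hL0 : L.sum = 0 := List.sum_eq_zero (fun x hx => by
          have h1 := sorted_cons_le hsort2.of_cons x hx
          omega)
        apply hs
        rw [hsum_eq]
        omega
      · intro t ht1 hta htk
        have hBF : BFollower k (a::b::c::d::L)
            (List.orderedInsert (· ≥ ·) (a - t) (b::c::d::L)) := by
          refine ⟨t, ht1, ?_, rfl⟩
          simp only [List.headI]
          omega
        have hnP := hall _ hBF
        obtain ⟨hs', hlen', h3', htriple⟩ := follower_facts hsort hc ht1 hta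
        have hsum' : (List.orderedInsert (· ≥ ·) (a - t) (b::c::d::L)).sum ≤ N := by
          have := hBF.sum_lt
          omega
        rw [ih _ hsum' hlen' hs' h3'] at hnP
        intro hC3
        apply hnP
        have : Cond3 k (FT a b ((c::d::L).sum) t) := hC3
        rw [← htriple] at this
        exact this
    · rintro ⟨ha, hall⟩
      refine ⟨?_, ?_⟩
      · rw [hsum_eq]; omega
      · rintro S' ⟨t, ht1, htm, rfl⟩
        simp only [List.headI, List.tail] at htm ⊢
        have hta : t ≤ a := le_trans htm (min_le_left _ _)
        have htk : t ≤ k := le_trans htm (min_le_right _ _)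
        have hspec := hall t ht1 hta htk
        obtain ⟨hs', hlen', h3', htriple⟩ := follower_facts hsort hc ht1 hta
        have hsum' : (List.orderedInsert (· ≥ ·) (a - t) (b::c::d::L)).sum ≤ N := by
          have : (List.orderedInsert (· ≥ ·) (a - t) (b::c::d::L)).sum
              < (a::b::c::d::L).sum := by
            have hperm := List.perm_orderedInsert (· ≥ ·) (a - t) (b::c::d::L)
            have := hperm.sum_eq
            simp only [List.sum_cons] at this ⊢
            omega
          omega
        rw [ih _ hsum' hlen' hs' h3']
        intro hC
        apply hspec
        rw [← htriple]
        exact hC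


lemma ones_getD_one {l : List ℕ} (hs : l.Pairwise (· ≥ ·)) (h1 : ∀ x ∈ l, x ≤ 1) :
    ∀ i, i < l.sum → l.getD i 0 = 1 := by
  induction l with
  | nil => simp
  | cons y l ih =>
    intro i hi
    have hs' : l.Pairwise (· ≥ ·) := hs.of_cons
    have hy := h1 y (by simp)
    have hle := sorted_cons_le hs
    rw [List.sum_cons] at hi
    cases i with
    | zero =>
      rw [List.getD_cons_zero]
      by_contra hy1
      have hy0 : y = 0 := by omega
      have : l.sum = 0 := List.sum_eq_zero (fun x hx => by have := hle x hx; omega)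
      omega
    | succ i =>
      rw [List.getD_cons_succ]
      exact ih hs' (fun x hx => h1 x (by simp [hx])) i (by omega)

lemma ones_getD_zero {l : List ℕ} (hs : l.Pairwise (· ≥ ·)) :
    ∀ i, l.sum ≤ i → l.getD i 0 = 0 := by
  induction l with
  | nil => simp
  | cons y l ih =>
    intro i hi
    have hs' : l.Pairwise (· ≥ ·) := hs.of_cons
    have hle := sorted_cons_le hs
    rw [List.sum_cons] at hi
    cases i with
    | zero =>
      rw [List.getD_cons_zero]
      omega
    | succ i =>
      rw [List.getD_cons_succ]
      rcases Nat.eq_zero_or_pos y with hy0 | hy1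
      · have : l.sum = 0 := List.sum_eq_zero (fun x hx => by have := hle x hx; omega)
        exact ih hs' i (by omega)
      · exact ih hs' i (by omega)

lemma beta_eq {S : List ℕ} (hlen : 4 ≤ S.length) (hsort : S.Pairwise (· ≥ ·))
    (h3 : heap S 3 ≤ 1) : beta S = (S.drop 2).sum := by
  rcases S with _ | ⟨a, _ | ⟨b, _ | ⟨c, _ | ⟨d, L⟩⟩⟩⟩
  · simp at hlen
  · simp at hlen
  · simp at hlen
  · simp at hlen
  have hsort1 : (b::c::d::L).Pairwise (· ≥ ·) := hsort.of_cons
  have hsort2 : (c::d::L).Pairwise (· ≥ ·) := hsort1.of_cons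
  have hLc : ∀ x ∈ d::L, x ≤ c := sorted_cons_le hsort2
  have hc3 : heap (a::b::c::d::L) 3 = c := by simp [heap]
  have hc : c ≤ 1 := by omega
  have hone : ∀ x ∈ c::d::L, x ≤ 1 := by
    intro x hx
    rcases List.mem_cons.mp hx with h | h
    · omega
    · have := hLc x h; omega
  rw [show List.drop 2 (a::b::c::d::L) = c::d::L from rfl]
  rcases Nat.eq_zero_or_pos c with hc0 | hc1
  · rw [beta, if_pos (by rw [hc3, hc0])]
    have : (d::L).sum = 0 := List.sum_eq_zero (fun x hx => by have := hLc x hx; omega)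
    simp [List.sum_cons, hc0, this]
  · have hc1' : c = 1 := by omega
    subst hc1'
    rw [beta, if_neg (by rw [hc3]; omega)]
    obtain ⟨m, hm⟩ : ∃ m, (1::d::L).sum = m := ⟨_, rfl⟩
    rw [hm]
    have hm1 : 1 ≤ m := by rw [← hm, List.sum_cons]; omega
    have hmlen : m ≤ 2 + L.length := by
      have := List.sum_le_card_nsmul (1::d::L) 1 hone
      simp only [smul_eq_mul, List.length_cons, mul_one] at this
      omega
    have hub : ∀ j ∈ {j : ℕ | 1 ≤ j ∧ j ≤ (a::b::1::d::L).length ∧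
        heap (a::b::1::d::L) j = heap (a::b::1::d::L) 3}, j ≤ m + 2 := by
      rintro j ⟨hj1, hj2, hj3⟩
      by_contra hj
      rw [hc3] at hj3
      have : heap (a::b::1::d::L) j = 0 := by
        rw [heap, show j - 1 = (j - 3) + 1 + 1 from by omega,
            List.getD_cons_succ, List.getD_cons_succ]
        exact ones_getD_zero hsort2 (j - 3) (by rw [hm]; omega)
      omega
    have hmem : m + 2 ∈ {j : ℕ | 1 ≤ j ∧ j ≤ (a::b::1::d::L).length ∧
        heap (a::b::1::d::L) j = heap (a::b::1::d::L) 3} := by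
      refine ⟨by omega, by simp only [List.length_cons]; omega, ?_⟩
      rw [hc3, heap, show m + 2 - 1 = (m - 1) + 1 + 1 from by omega,
          List.getD_cons_succ, List.getD_cons_succ]
      exact ones_getD_one hsort2 hone (m - 1) (by rw [hm]; omega)
    have hsup : sSup {j : ℕ | 1 ≤ j ∧ j ≤ (a::b::1::d::L).length ∧
        heap (a::b::1::d::L) j = heap (a::b::1::d::L) 3} = m + 2 :=
      le_antisymm (csSup_le ⟨m + 2, hmem⟩ hub) (le_csSup ⟨m + 2, hub⟩ hmem)
    rw [hsup]
    omega

theorem stmt12 (k : ℕ) (hk : 2 ≤ k) (S : List ℕ) (hn : 4 ≤ S.length) (hsorted : S.Pairwise (· ≥ ·))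
    (h3 : heap S 3 ≤ 1) (hb : Even (beta S)) (hP : MisereBP k S) :
    KNice k (heap S 1) (heap S 2) := by
  have hb' : Even ((S.drop 2).sum) := by
    rw [← beta_eq hn hsorted h3]; exact hb
  have hC := (bridge k hk S.sum S le_rfl hn hsorted h3).mp hP
  rwa [Cond, if_pos hb'] at hC
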